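/- Let I and J be finite index types and let α, β, γ be complex numbers satisfying α + β + γ = 0 and αβ + βγ + γα = 0. On the space A of pairs X = (X₁, X₂), where X₁ is an I×J complex matrix and X₂ is a J×I complex matrix, define the 3-commutator T(X, Y, Z) = (P, Q) with P = α(X₁Y₂Z₁ + Z₁Y₂X₁) + β(Z₁X₂Y₁ + Y₁X₂Z₁) + γ(X₁Z₂Y₁ + Y₁Z₂X₁) and Q = α(X₂Y₁Z₂ + Z₂Y₁X₂) + β(Z₂X₁Y₂ + Y₂X₁Z₂) + γ(X₂Z₁Y₂ + Y₂Z₁X₂). Then for all A, B, C, D, E in A, writing ((X,Y,Z)W,V) for T(T(X,Y,Z), W, V), one has ((A,B,C)D,E) + ((B,C,D)E,A) + ((C,D,E)A,B) + ((D,E,A)B,C) + ((E,A,B)C,D) + ((C,B,A)E,D) + ((B,A,E)D,C) + ((A,E,D)C,B) + ((E,D,C)B,A) + ((D,C,B)A,E) + ((D,A,C)E,B) + ((A,C,E)B,D) + ((C,E,B)D,A) + ((E,B,D)A,C) + ((B,D,A)C,E) + ((C,A,D)B,E) + ((A,D,B)E,C) + ((D,B,E)C,A) + ((B,E,C)A,D)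 + ((E,C,A)D,B) = 0. -/
import Mathlib


open Matrix Complex

/-- The 3-commutator on pairs of rectangular matrices
`(X₁ : I×J, X₂ : J×I)`, with weights `α β γ`. -/
noncomputable def tcomm {I J : Type*} [Fintype I] [Fintype J] (α β γ : ℂ)
    (X Y Z : Matrix I J ℂ × Matrix J I ℂ) : Matrix I J ℂ × Matrix J I ℂ :=
  (α • (X.1 * Y.2 * Z.1 + Z.1 * Y.2 * X.1) +
     β • (Z.1 * X.2 * Y.1 + Y.1 * X.2 * Z.1) +
     γ • (X.1 * Z.2 * Y.1 + Y.1 * Z.2 * X.1),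
   α • (X.2 * Y.1 * Z.2 + Z.2 * Y.1 * X.2) +
     β • (Z.2 * X.1 * Y.2 + Y.2 * X.1 * Z.2) +
     γ • (X.2 * Z.1 * Y.2 + Y.2 * Z.1 * X.2))

set_option maxHeartbeats 4000000 in
lemma texpand {I J : Type*} [Fintype I] [Fintype J] (a b c : ℂ)
    (X1 Y1 Z1 W1 V1 : Matrix I J ℂ) (X2 Y2 Z2 W2 V2 : Matrix J I ℂ) :
    tcomm a b c (tcomm a b c (X1, X2) (Y1, Y2) (Z1, Z2)) (W1, W2) (V1, V2) =
    ((a * a) • (X1 * Y2 * Z1 * W2 * V1) +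
       (a * a) • (Z1 * Y2 * X1 * W2 * V1) +
       (a * b) • (Z1 * X2 * Y1 * W2 * V1) +
       (a * b) • (Y1 * X2 * Z1 * W2 * V1) +
       (a * c) • (X1 * Z2 * Y1 * W2 * V1) +
       (a * c) • (Y1 * Z2 * X1 * W2 * V1) +
       (a * a) • (V1 * W2 * X1 * Y2 * Z1) +
       (a * a) • (V1 * W2 * Z1 * Y2 * X1) +
       (a * b) • (V1 * W2 * Z1 * X2 * Y1) +
       (a * b) • (V1 * W2 * Y1 * X2 * Z1) +
       (a * c) • (V1 * W2 * X1 * Z2 * Y1) +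
       (a * c) • (V1 * W2 * Y1 * Z2 * X1) +
       (b * a) • (V1 * X2 * Y1 * Z2 * W1) +
       (b * a) • (V1 * Z2 * Y1 * X2 * W1) +
       (b * b) • (V1 * Z2 * X1 * Y2 * W1) +
       (b * b) • (V1 * Y2 * X1 * Z2 * W1) +
       (b * c) • (V1 * X2 * Z1 * Y2 * W1) +
       (b * c) • (V1 * Y2 * Z1 * X2 * W1) +
       (b * a) • (W1 * X2 * Y1 * Z2 * V1) +
       (b * a) • (W1 * Z2 * Y1 * X2 * V1) +
       (b * b) • (W1 * Z2 * X1 * Y2 * V1) +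
       (b * b) • (W1 * Y2 * X1 * Z2 * V1) +
       (b * c) • (W1 * X2 * Z1 * Y2 * V1) +
       (b * c) • (W1 * Y2 * Z1 * X2 * V1) +
       (c * a) • (X1 * Y2 * Z1 * V2 * W1) +
       (c * a) • (Z1 * Y2 * X1 * V2 * W1) +
       (c * b) • (Z1 * X2 * Y1 * V2 * W1) +
       (c * b) • (Y1 * X2 * Z1 * V2 * W1) +
       (c * c) • (X1 * Z2 * Y1 * V2 * W1) +
       (c * c) • (Y1 * Z2 * X1 * V2 * W1) +
       (c * a) • (W1 * V2 * X1 * Y2 * Z1) +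
       (c * a) • (W1 * V2 * Z1 * Y2 * X1) +
       (c * b) • (W1 * V2 * Z1 * X2 * Y1) +
       (c * b) • (W1 * V2 * Y1 * X2 * Z1) +
       (c * c) • (W1 * V2 * X1 * Z2 * Y1) +
       (c * c) • (W1 * V2 * Y1 * Z2 * X1),
     (a * a) • (X2 * Y1 * Z2 * W1 * V2) +
       (a * a) • (Z2 * Y1 * X2 * W1 * V2) +
       (a * b) • (Z2 * X1 * Y2 * W1 * V2) +
       (a * b) • (Y2 * X1 * Z2 * W1 * V2) +
       (a * c) • (X2 * Z1 * Y2 * W1 * V2) +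
       (a * c) • (Y2 * Z1 * X2 * W1 * V2) +
       (a * a) • (V2 * W1 * X2 * Y1 * Z2) +
       (a * a) • (V2 * W1 * Z2 * Y1 * X2) +
       (a * b) • (V2 * W1 * Z2 * X1 * Y2) +
       (a * b) • (V2 * W1 * Y2 * X1 * Z2) +
       (a * c) • (V2 * W1 * X2 * Z1 * Y2) +
       (a * c) • (V2 * W1 * Y2 * Z1 * X2) +
       (b * a) • (V2 * X1 * Y2 * Z1 * W2) +
       (b * a) • (V2 * Z1 * Y2 * X1 * W2) +
       (b * b) • (V2 * Z1 * X2 * Y1 * W2) +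
       (b * b) • (V2 * Y1 * X2 * Z1 * W2) +
       (b * c) • (V2 * X1 * Z2 * Y1 * W2) +
       (b * c) • (V2 * Y1 * Z2 * X1 * W2) +
       (b * a) • (W2 * X1 * Y2 * Z1 * V2) +
       (b * a) • (W2 * Z1 * Y2 * X1 * V2) +
       (b * b) • (W2 * Z1 * X2 * Y1 * V2) +
       (b * b) • (W2 * Y1 * X2 * Z1 * V2) +
       (b * c) • (W2 * X1 * Z2 * Y1 * V2) +
       (b * c) • (W2 * Y1 * Z2 * X1 * V2) +
       (c * a) • (X2 * Y1 * Z2 * V1 * W2) +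
       (c * a) • (Z2 * Y1 * X2 * V1 * W2) +
       (c * b) • (Z2 * X1 * Y2 * V1 * W2) +
       (c * b) • (Y2 * X1 * Z2 * V1 * W2) +
       (c * c) • (X2 * Z1 * Y2 * V1 * W2) +
       (c * c) • (Y2 * Z1 * X2 * V1 * W2) +
       (c * a) • (W2 * V1 * X2 * Y1 * Z2) +
       (c * a) • (W2 * V1 * Z2 * Y1 * X2) +
       (c * b) • (W2 * V1 * Z2 * X1 * Y2) +
       (c * b) • (W2 * V1 * Y2 * X1 * Z2) +
       (c * c) • (W2 * V1 * X2 * Z1 * Y2) +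
       (c * c) • (W2 * V1 * Y2 * Z1 * X2)) := by
  simp only [tcomm, Prod.mk.injEq]
  refine ⟨?_, ?_⟩ <;>
  · simp only [Matrix.add_mul, Matrix.mul_add, Matrix.smul_mul, Matrix.mul_smul, smul_smul, smul_add, Matrix.mul_assoc]
    module

set_option maxHeartbeats 40000000 in
theorem stmt_8 {I J : Type*} [Fintype I] [Fintype J]
    (α β γ : ℂ) (h1 : α + β + γ = 0)
    (h2 : α * β + β * γ + γ * α = 0)
    (A B C D E : Matrix I J ℂ × Matrix J I ℂ) :
    tcomm α β γ (tcomm α β γ A B C) D E + tcomm α β γ (tcomm α β γ B C D) E A +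
    tcomm α β γ (tcomm α β γ C D E) A B + tcomm α β γ (tcomm α β γ D E A) B C +
    tcomm α β γ (tcomm α β γ E A B) C D + tcomm α β γ (tcomm α β γ C B A) E D +
    tcomm α β γ (tcomm α β γ B A E) D C + tcomm α β γ (tcomm α β γ A E D) C B +
    tcomm α β γ (tcomm α β γ E D C) B A + tcomm α β γ (tcomm α β γ D C B) A E +
    tcomm α β γ (tcomm α β γ D A C) E B + tcomm α β γ (tcomm α β γ A C E) B D +
    tcomm α β γ (tcomm α β γ C E B) D A + tcomm α β γ (tcomm α β γ E B D) A C +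
    tcomm α β γ (tcomm α β γ B D A) C E + tcomm α β γ (tcomm α β γ C A D) B E +
    tcomm α β γ (tcomm α β γ A D B) E C + tcomm α β γ (tcomm α β γ D B E) C A +
    tcomm α β γ (tcomm α β γ B E C) A D + tcomm α β γ (tcomm α β γ E C A) D B = 0 := by
  have hγ : γ = -α - β := by linear_combination h1
  subst hγ
  have hq : α ^ 2 + α * β + β ^ 2 = 0 := by linear_combination -h2
  obtain ⟨A1, A2⟩ := A
  obtain ⟨B1, B2⟩ := B
  obtain ⟨C1, C2⟩ := C
  obtain ⟨D1, D2⟩ := D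
  obtain ⟨E1, E2⟩ := E
  simp only [texpand, Prod.mk_add_mk]
  rw [Prod.mk_eq_zero]
  constructor <;>
    match_scalars <;>
      first
        | ring1
        | linear_combination hq
        | linear_combination (-2 : ℂ) * hq
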